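/- Let r ≥ 0 and let x_a < x_b. If v is continuously differentiable on [x_a, x_b] and is regarded as the weak function (v restricted to (x_a,x_b), v(x_a), v(x_b)), then its discrete weak derivative d_{w,r}v equals the L²(x_a,x_b)-orthogonal projection of v′ onto the space of polynomials of degree at most r; in particular ∫_{x_a}^{x_b} (d_{w,r}v − v′)·q dx = 0 for every polynomial q of degree at most r. -/

import Mathlib

open MeasureTheory Set

noncomputable section

/-- `p` is the discrete weak derivative of order `r` of the weak function
`(v0, vl, vr)` on the interval `(c, d)`: it is a polynomial of degree at most `r`
satisfying `∫ p q = -∫ v0 q' + vr q(d) - vl q(c)` for all polynomials `q` of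
degree at most `r`. -/
def IsWeakDeriv (r : ℕ) (c d : ℝ) (v0 : ℝ → ℝ) (vl vr : ℝ) (p : Polynomial ℝ) : Prop :=
  p.degree ≤ (r : WithBot ℕ) ∧ ∀ q : Polynomial ℝ, q.degree ≤ (r : WithBot ℕ) →
    (∫ t in c..d, p.eval t * q.eval t) =
      -(∫ t in c..d, v0 t * q.derivative.eval t) + vr * q.eval d - vl * q.eval c

/-- `p` is the L²(c,d)-orthogonal projection of `g` onto polynomials of degree at most `l`. -/
def IsL2Proj (l : ℕ) (c d : ℝ) (g : ℝ → ℝ) (p : Polynomial ℝ) : Prop :=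
  p.degree ≤ (l : WithBot ℕ) ∧ ∀ q : Polynomial ℝ, q.degree ≤ (l : WithBot ℕ) →
    (∫ t in c..d, (g t - p.eval t) * q.eval t) = 0

/-- If `v` is continuously differentiable on `[x_a, x_b]` (with derivative
`v'`) and is regarded as the weak function `(v, v(x_a), v(x_b))`, then its discrete weak
derivative of order `r` is the L²-orthogonal projection of `v'` onto polynomials of degree
at most `r`; in particular `∫ (d_{w,r}v - v') q = 0` for every such `q`. -/
theorem discrete_weak_derivative_of_smooth (r : ℕ) (xa xb : ℝ) (hab : xa < xb)
    (v v' : ℝ → ℝ)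
    (hv : ∀ t ∈ Set.Icc xa xb, HasDerivWithinAt v (v' t) (Set.Icc xa xb) t)
    (hv' : ContinuousOn v' (Set.Icc xa xb))
    (p : Polynomial ℝ) (hp : IsWeakDeriv r xa xb v (v xa) (v xb) p) :
    IsL2Proj r xa xb v' p := by
  obtain ⟨hdeg, hint⟩ := hp
  refine ⟨hdeg, fun q hq => ?_⟩
  have hvc : ContinuousOn v (Set.Icc xa xb) := fun t ht =>
    (hv t ht).continuousWithinAt
  -- integration by parts
  have key : (∫ t in xa..xb, (v' t * q.eval t + v t * q.derivative.eval t)) =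
      v xb * q.eval xb - v xa * q.eval xa := by
    have := intervalIntegral.integral_eq_sub_of_hasDerivAt_of_le hab.le
      (f := fun t => v t * q.eval t)
      (f' := fun t => v' t * q.eval t + v t * q.derivative.eval t)
      (hvc.mul q.continuous.continuousOn)
      (fun t ht => by
        have h1 : HasDerivAt v (v' t) t := by
          have := hv t (Set.Ioo_subset_Icc_self ht)
          exact this.hasDerivAt (Icc_mem_nhds ht.1 ht.2)
        exact h1.mul (q.hasDerivAt t))
      (((hv'.mul q.continuous.continuousOn).add
        (hvc.mul q.derivative.continuous.continuousOn)).intervalIntegrable_of_Icc hab.le)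
    exact this
  have hi1 : IntervalIntegrable (fun t => v' t * q.eval t) MeasureTheory.volume xa xb :=
    (hv'.mul q.continuous.continuousOn).intervalIntegrable_of_Icc hab.le
  have hi2 : IntervalIntegrable (fun t => v t * q.derivative.eval t)
      MeasureTheory.volume xa xb :=
    (hvc.mul q.derivative.continuous.continuousOn).intervalIntegrable_of_Icc hab.le
  have key2 : (∫ t in xa..xb, v' t * q.eval t) =
      -(∫ t in xa..xb, v t * q.derivative.eval t) + v xb * q.eval xb - v xa * q.eval xa := by
    rw [intervalIntegral.integral_add hi1 hi2] at key
    linarith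
  have hip : IntervalIntegrable (fun t => p.eval t * q.eval t) MeasureTheory.volume xa xb :=
    (p.continuous.mul q.continuous).intervalIntegrable _ _
  have : (∫ t in xa..xb, (v' t - p.eval t) * q.eval t) =
      (∫ t in xa..xb, v' t * q.eval t) - (∫ t in xa..xb, p.eval t * q.eval t) := by
    rw [← intervalIntegral.integral_sub hi1 hip]
    congr 1; ext t; ring
  rw [this, key2, hint q hq]
  ring
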